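/- Let n ≥ 1 and α > 0 be real, and let x₀ be a fixed real symmetric positive-definite n×n matrix. Then the section y ↦ k_α(x₀, y) = (det x₀ · det y / det(x₀ + y)²)^α of the Beta-prime kernel vanishes at infinity on the open cone of positive-definite matrices: for every ε > 0, the set {y : y is a real symmetric positive-definite n×n matrix and (det x₀ · det y / det(x₀+y)²)^α ≥ ε} is a compact subset of the space of real symmetric n×n matrices. -/

import Mathlib

open Matrix

variable {n : ℕ}

private lemma bp_spectral_shift {A : Matrix (Fin n) (Fin n) ℝ} (hA : A.IsHermitian) (c : ℝ) :
    c • (1 : Matrix (Fin n) (Fin n) ℝ) + A =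
      (hA.eigenvectorUnitary : Matrix (Fin n) (Fin n) ℝ) *
        Matrix.diagonal (fun i => c + hA.eigenvalues i) *
        star (hA.eigenvectorUnitary : Matrix (Fin n) (Fin n) ℝ) := by
  have hU : (hA.eigenvectorUnitary : Matrix (Fin n) (Fin n) ℝ) *
      star (hA.eigenvectorUnitary : Matrix (Fin n) (Fin n) ℝ) = 1 :=
    (Matrix.mem_unitaryGroup_iff).mp hA.eigenvectorUnitary.2
  have hd : (Matrix.diagonal (fun i => c + hA.eigenvalues i) : Matrix (Fin n) (Fin n) ℝ)
      = c • 1 + Matrix.diagonal (RCLike.ofReal ∘ hA.eigenvalues) := by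
    rw [Matrix.smul_one_eq_diagonal, ← Matrix.diagonal_add]
    congr 1
  rw [hd, Matrix.mul_add, Matrix.add_mul, mul_smul_comm, smul_mul_assoc, Matrix.mul_one, hU]
  conv_lhs => rw [hA.spectral_theorem, Unitary.conjStarAlgAut_apply]

private lemma bp_det_shift {A : Matrix (Fin n) (Fin n) ℝ} (hA : A.IsHermitian) (c : ℝ) :
    (c • (1 : Matrix (Fin n) (Fin n) ℝ) + A).det = ∏ i, (c + hA.eigenvalues i) := by
  have hU : (hA.eigenvectorUnitary : Matrix (Fin n) (Fin n) ℝ) *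
      star (hA.eigenvectorUnitary : Matrix (Fin n) (Fin n) ℝ) = 1 :=
    (Matrix.mem_unitaryGroup_iff).mp hA.eigenvectorUnitary.2
  rw [bp_spectral_shift hA c, Matrix.det_mul_right_comm, hU, Matrix.one_mul,
    Matrix.det_diagonal]

private lemma bp_psd_shift {A : Matrix (Fin n) (Fin n) ℝ} (hA : A.IsHermitian) (c : ℝ)
    (h : ∀ i, 0 ≤ c + hA.eigenvalues i) :
    (c • (1 : Matrix (Fin n) (Fin n) ℝ) + A).PosSemidef := by
  rw [bp_spectral_shift hA c]
  exact (Matrix.PosSemidef.diagonal h).mul_mul_conjTranspose_same _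

private lemma bp_trace_eq {A : Matrix (Fin n) (Fin n) ℝ} (hA : A.IsHermitian) :
    A.trace = ∑ i, hA.eigenvalues i := by
  have hU : star (hA.eigenvectorUnitary : Matrix (Fin n) (Fin n) ℝ) *
      (hA.eigenvectorUnitary : Matrix (Fin n) (Fin n) ℝ) = 1 :=
    (Matrix.mem_unitaryGroup_iff').mp hA.eigenvectorUnitary.2
  conv_lhs => rw [hA.spectral_theorem, Unitary.conjStarAlgAut_apply]
  rw [Matrix.trace_mul_cycle, Matrix.mul_assoc, ← Matrix.mul_assoc, hU, Matrix.one_mul,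
    Matrix.trace_diagonal]
  simp [RCLike.ofReal_real_eq_id]

private lemma bp_det_add_le {A E : Matrix (Fin n) (Fin n) ℝ} (hA : A.PosSemidef)
    (hE : E.PosDef) : E.det ≤ (A + E).det := by
  classical
  open MatrixOrder in set S := CFC.sqrt E with hSdef
  have hS : S.PosSemidef := by open MatrixOrder in exact (CFC.sqrt_nonneg E).posSemidef
  have hSS : S * S = E := by open MatrixOrder in exact CFC.sqrt_mul_sqrt_self E hE.posSemidef.nonneg
  have hdetE : 0 < E.det := hE.det_pos
  have hdetS : S.det ≠ 0 := by
    intro h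
    rw [← hSS, Matrix.det_mul, h, mul_zero] at hdetE
    exact lt_irrefl 0 hdetE
  have hSH : S.IsHermitian := hS.isHermitian
  have hSinvH : (S⁻¹)ᴴ = S⁻¹ := by
    rw [Matrix.conjTranspose_nonsing_inv, hSH.eq]
  set C := S⁻¹ * A * S⁻¹ with hCdef
  have hC : C.PosSemidef := by
    have := hA.mul_mul_conjTranspose_same S⁻¹
    rwa [hSinvH] at this
  have hkey : A + E = S * (C + 1) * S := by
    rw [Matrix.mul_add, Matrix.add_mul, Matrix.mul_one, hSS, hCdef]
    rw [← Matrix.mul_assoc, ← Matrix.mul_assoc, Matrix.mul_nonsing_inv _ (isUnit_iff_ne_zero.mpr hdetS),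
      Matrix.one_mul, Matrix.mul_assoc, Matrix.nonsing_inv_mul _ (isUnit_iff_ne_zero.mpr hdetS), Matrix.mul_one]
  have hdet1C : 1 ≤ (C + 1).det := by
    have h1 : C + 1 = (1 : ℝ) • (1 : Matrix (Fin n) (Fin n) ℝ) + C := by
      rw [one_smul, add_comm]
    rw [h1, bp_det_shift hC.isHermitian 1]
    calc (1:ℝ) = ∏ _i : Fin n, (1:ℝ) := by rw [Finset.prod_const_one]
      _ ≤ ∏ i, (1 + hC.isHermitian.eigenvalues i) :=
        Finset.prod_le_prod (fun i _ => zero_le_one)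
          (fun i _ => by linarith [hC.eigenvalues_nonneg i])
  calc E.det = E.det * 1 := (mul_one _).symm
    _ ≤ E.det * (C + 1).det := by
        exact mul_le_mul_of_nonneg_left hdet1C hdetE.le
    _ = S.det * (C + 1).det * S.det := by rw [← hSS, Matrix.det_mul]; ring
    _ = (A + E).det := by rw [hkey, Matrix.det_mul, Matrix.det_mul]

private lemma bp_isClosed_psd :
    IsClosed {y : Matrix (Fin n) (Fin n) ℝ | y.PosSemidef} := by
  have hset : {y : Matrix (Fin n) (Fin n) ℝ | y.PosSemidef}
      = {y : Matrix (Fin n) (Fin n) ℝ | yᴴ = y} ∩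
        ⋂ x : Fin n → ℝ, {y | 0 ≤ dotProduct (star x) (y *ᵥ x)} := by
    ext y
    simp only [Set.mem_setOf_eq, Set.mem_inter_iff, Set.mem_iInter]
    exact Matrix.posSemidef_iff_dotProduct_mulVec
  rw [hset]
  refine IsClosed.inter (isClosed_eq (Continuous.matrix_conjTranspose continuous_id) continuous_id)
    (isClosed_iInter fun x => isClosed_le continuous_const ?_)
  exact Continuous.dotProduct continuous_const
    (Continuous.matrix_mulVec continuous_id continuous_const)

private lemma bp_posDef_of_det_ne_zero {y : Matrix (Fin n) (Fin n) ℝ}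
    (hy : y.PosSemidef) (hd : y.det ≠ 0) : y.PosDef := by
  refine Matrix.PosDef.of_dotProduct_mulVec_pos hy.1 fun x hx => ?_
  rcases (hy.dotProduct_mulVec_nonneg x).lt_or_eq with h | h
  · exact h
  · exfalso
    apply hx
    have h0 : y *ᵥ x = 0 := (hy.dotProduct_mulVec_zero_iff x).mp h.symm
    have : y⁻¹ *ᵥ (y *ᵥ x) = x := by
      rw [Matrix.mulVec_mulVec, Matrix.nonsing_inv_mul _ (isUnit_iff_ne_zero.mpr hd),
        Matrix.one_mulVec]
    rw [h0, Matrix.mulVec_zero] at this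
    exact this.symm

private lemma bp_entry_le_trace {y : Matrix (Fin n) (Fin n) ℝ}
    (hy : y.PosSemidef) (i j : Fin n) : |y i j| ≤ y.trace := by
  classical
  have hdiag : ∀ k, 0 ≤ y k k := fun k => by
    have := hy.dotProduct_mulVec_nonneg (Pi.single k 1)
    simpa [dotProduct_single, single_dotProduct] using this
  have htr : ∀ k, y k k ≤ y.trace := fun k => by
    rw [Matrix.trace]
    exact Finset.single_le_sum (fun l _ => hdiag l) (Finset.mem_univ k)
  have hsym : y j i = y i j := by
    have := hy.isHermitian
    conv_lhs => rw [← this.eq]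
    simp [Matrix.conjTranspose_apply]
  have hq : ∀ a : ℝ, 0 ≤ y i i + a * (y i j + y j i) + a * a * y j j := by
    intro a
    have := hy.dotProduct_mulVec_nonneg (Pi.single i 1 + a • (Pi.single j 1 : Fin n → ℝ))
    simp only [Matrix.mulVec_add, Matrix.mulVec_smul, dotProduct_add,
      add_dotProduct, smul_dotProduct, dotProduct_smul,
      star_add, star_smul] at this
    simp only [Matrix.mulVec_single, dotProduct_single, single_dotProduct,
      smul_eq_mul, star_trivial, mul_one, one_mul, MulOpposite.op_one, one_smul,
      Matrix.col_apply] at this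
    nlinarith [this]
  have h1 := hq 1
  have h2 := hq (-1)
  rw [abs_le]
  constructor
  · nlinarith [htr i, htr j, hdiag i, hdiag j]
  · nlinarith [htr i, htr j, hdiag i, hdiag j]


/-- For `n ≥ 1`, real `α > 0` and a fixed real symmetric positive-definite
`n×n` matrix `x₀`, the section `y ↦ k_α(x₀,y) = (det x₀ · det y / det(x₀+y)²)^α` of the
Beta-prime kernel vanishes at infinity on the open cone of positive-definite matrices: each of
its superlevel sets is a compact subset of the space of real symmetric `n×n` matrices. -/
theorem betaPrime_section_vanishes_at_infinity
    (n : ℕ) (hn : 1 ≤ n) (α : ℝ) (hα : 0 < α)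
    (x₀ : Matrix (Fin n) (Fin n) ℝ) (hx₀ : x₀.PosDef) :
    ∀ ε : ℝ, 0 < ε →
      IsCompact {y : Matrix (Fin n) (Fin n) ℝ |
        y.PosDef ∧ ε ≤ (x₀.det * y.det / ((x₀ + y).det) ^ 2) ^ α} := by
  intro ε hε
  classical
  have hne : Nonempty (Fin n) := Fin.pos_iff_nonempty.mp hn
  set ν := hx₀.isHermitian.eigenvalues with hν
  set c := Finset.univ.inf' Finset.univ_nonempty ν with hcdef
  have hcpos : 0 < c := (Finset.lt_inf'_iff _).mpr fun i _ => hx₀.eigenvalues_pos i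
  have hcle : ∀ i, c ≤ ν i := fun i => Finset.inf'_le ν (Finset.mem_univ i)
  set δ := ε ^ α⁻¹ with hδdef
  have hδ : 0 < δ := Real.rpow_pos_of_pos hε _
  set K := max (1 / (4 * c)) 1 with hKdef
  have hK1 : (1:ℝ) ≤ K := le_max_right _ _
  have hK0 : 0 < K := lt_of_lt_of_le one_pos hK1
  have hKc : 1 / (4 * c) ≤ K := le_max_left _ _
  set Λ := x₀.det * K ^ n / δ with hΛdef
  set R := (n : ℝ) * Λ with hRdef
  -- x₀ - c•1 is PSD
  have hx₀c : (x₀ - c • 1).PosSemidef := by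
    have h := bp_psd_shift hx₀.isHermitian (-c) (fun i => by linarith [hcle i])
    have he : (-c) • (1 : Matrix (Fin n) (Fin n) ℝ) + x₀ = x₀ - c • 1 := by
      rw [neg_smul]; abel
    rwa [he] at h
  -- entry bound for members of the set
  have hbound : ∀ y : Matrix (Fin n) (Fin n) ℝ,
      y.PosDef → ε ≤ (x₀.det * y.det / ((x₀ + y).det) ^ 2) ^ α →
      ∀ i j, |y i j| ≤ R := by
    intro y hy hεy i j
    set μ := hy.isHermitian.eigenvalues with hμ
    have hμpos : ∀ k, 0 < μ k := fun k => hy.eigenvalues_pos k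
    have hdet_y : y.det = ∏ k, μ k := by
      simpa using hy.isHermitian.det_eq_prod_eigenvalues
    have hxy : (x₀ + y).PosDef := hx₀.add hy
    have hcμ : ∀ k, 0 < c + μ k := fun k => by linarith [hμpos k]
    have hE : (c • (1 : Matrix (Fin n) (Fin n) ℝ) + y).det = ∏ k, (c + μ k) :=
      bp_det_shift hy.isHermitian c
    have hEpd : (c • (1 : Matrix (Fin n) (Fin n) ℝ) + y).PosDef := by
      have h1 : (c • (1 : Matrix (Fin n) (Fin n) ℝ)).PosDef := by
        rw [Matrix.smul_one_eq_diagonal]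
        exact Matrix.posDef_diagonal_iff.mpr fun i => hcpos
      exact h1.add hy
    have hsplit : x₀ + y = (x₀ - c • 1) + (c • 1 + y) := by abel
    have hElow : ∏ k, (c + μ k) ≤ (x₀ + y).det := by
      rw [hsplit, ← hE]
      exact bp_det_add_le hx₀c hEpd
    have hprodpos : 0 < ∏ k, (c + μ k) := Finset.prod_pos fun k _ => hcμ k
    set t := x₀.det * y.det / ((x₀ + y).det) ^ 2 with htdef
    have ht0 : 0 < t := div_pos (mul_pos hx₀.det_pos hy.det_pos) (pow_pos hxy.det_pos 2)
    have hδt : δ ≤ t := by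
      have h1 : ε ^ α⁻¹ ≤ (t ^ α) ^ α⁻¹ :=
        Real.rpow_le_rpow hε.le hεy (inv_nonneg.mpr hα.le)
      rwa [← Real.rpow_mul ht0.le, mul_inv_cancel₀ hα.ne', Real.rpow_one] at h1
    have hμΛ : ∀ k, μ k ≤ Λ := by
      intro k
      have ht2 : t ≤ x₀.det * y.det / (∏ l, (c + μ l)) ^ 2 := by
        rw [htdef]
        apply div_le_div_of_nonneg_left (mul_pos hx₀.det_pos hy.det_pos).le
          (by positivity)
        exact pow_le_pow_left₀ hprodpos.le hElow 2
      have hprod_eq : x₀.det * y.det / (∏ l, (c + μ l)) ^ 2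
          = x₀.det * ∏ l, (μ l / (c + μ l) ^ 2) := by
        rw [hdet_y, mul_div_assoc, ← Finset.prod_pow, ← Finset.prod_div_distrib]
      have hfactor : ∀ l, μ l / (c + μ l) ^ 2 ≤ K := by
        intro l
        refine le_trans ?_ hKc
        rw [div_le_div_iff₀ (pow_pos (hcμ l) 2) (by linarith [hcpos])]
        nlinarith [sq_nonneg (c - μ l), hμpos l, hcpos]
      have hfk : μ k / (c + μ k) ^ 2 ≤ 1 / μ k := by
        rw [div_le_div_iff₀ (pow_pos (hcμ k) 2) (hμpos k)]
        nlinarith [hμpos k, hcpos]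
      have hprod_le : ∏ l, (μ l / (c + μ l) ^ 2) ≤ 1 / μ k * K ^ n := by
        rw [← Finset.mul_prod_erase Finset.univ _ (Finset.mem_univ k)]
        have h1 : ∏ l ∈ Finset.univ.erase k, (μ l / (c + μ l) ^ 2)
            ≤ ∏ _l ∈ Finset.univ.erase k, K :=
          Finset.prod_le_prod (fun l _ => (div_pos (hμpos l) (pow_pos (hcμ l) 2)).le)
            (fun l _ => hfactor l)
        have h2 : (∏ _l ∈ Finset.univ.erase k, K) = K ^ (n - 1) := by
          rw [Finset.prod_const, Finset.card_erase_of_mem (Finset.mem_univ k),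
            Finset.card_univ, Fintype.card_fin]
        have h3 : K ^ (n - 1) ≤ K ^ n := pow_le_pow_right₀ hK1 (Nat.sub_le n 1)
        have h4 : ∏ l ∈ Finset.univ.erase k, (μ l / (c + μ l) ^ 2) ≤ K ^ n :=
          h1.trans (h2 ▸ h3)
        have h5 : 0 ≤ ∏ l ∈ Finset.univ.erase k, (μ l / (c + μ l) ^ 2) :=
          Finset.prod_nonneg fun l _ => (div_pos (hμpos l) (pow_pos (hcμ l) 2)).le
        exact mul_le_mul hfk h4 h5 (one_div_nonneg.mpr (hμpos k).le)
      have hδ2 : δ ≤ x₀.det * (1 / μ k * K ^ n) := by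
        calc δ ≤ t := hδt
          _ ≤ x₀.det * y.det / (∏ l, (c + μ l)) ^ 2 := ht2
          _ = x₀.det * ∏ l, (μ l / (c + μ l) ^ 2) := hprod_eq
          _ ≤ x₀.det * (1 / μ k * K ^ n) :=
            mul_le_mul_of_nonneg_left hprod_le hx₀.det_pos.le
      have hδ3 : δ * μ k ≤ x₀.det * K ^ n := by
        have : x₀.det * (1 / μ k * K ^ n) = x₀.det * K ^ n / μ k := by
          field_simp
        rw [this, le_div_iff₀ (hμpos k)] at hδ2
        exact hδ2
      rw [hΛdef, le_div_iff₀ hδ]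
      linarith [hδ3]
    have htr : y.trace ≤ R := by
      rw [bp_trace_eq hy.isHermitian, hRdef]
      calc ∑ k, μ k ≤ ∑ _k : Fin n, Λ := Finset.sum_le_sum fun k _ => hμΛ k
        _ = (n : ℝ) * Λ := by
          rw [Finset.sum_const, Finset.card_univ, Fintype.card_fin, nsmul_eq_mul]
    exact (bp_entry_le_trace hy.posSemidef i j).trans htr
  -- topological setup
  have hg : Continuous fun y : Matrix (Fin n) (Fin n) ℝ => (x₀ + y).det :=
    (continuous_const.add continuous_id).matrix_det
  set W := {y : Matrix (Fin n) (Fin n) ℝ | (x₀ + y).det ≠ 0} with hWdef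
  have hWopen : IsOpen W := IsOpen.preimage hg isOpen_ne
  have hfc : ContinuousOn
      (fun y : Matrix (Fin n) (Fin n) ℝ => (x₀.det * y.det / ((x₀ + y).det) ^ 2) ^ α) W := by
    apply ContinuousOn.rpow_const
    · exact (continuous_const.mul (continuous_id.matrix_det)).continuousOn.div
        ((hg.pow 2).continuousOn) (fun y hy => pow_ne_zero 2 hy)
    · exact fun y _ => Or.inr hα.le
  have hSC : {y : Matrix (Fin n) (Fin n) ℝ |
        y.PosDef ∧ ε ≤ (x₀.det * y.det / ((x₀ + y).det) ^ 2) ^ α}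
      = {y : Matrix (Fin n) (Fin n) ℝ |
        y.PosSemidef ∧ ε ≤ (x₀.det * y.det / ((x₀ + y).det) ^ 2) ^ α} := by
    ext y
    simp only [Set.mem_setOf_eq]
    constructor
    · rintro ⟨h1, h2⟩; exact ⟨h1.posSemidef, h2⟩
    · rintro ⟨h1, h2⟩
      refine ⟨bp_posDef_of_det_ne_zero h1 ?_, h2⟩
      intro hd0
      rw [hd0] at h2
      rw [mul_zero, zero_div, Real.zero_rpow hα.ne'] at h2
      linarith
  have hclosed : IsClosed {y : Matrix (Fin n) (Fin n) ℝ |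
      y.PosSemidef ∧ ε ≤ (x₀.det * y.det / ((x₀ + y).det) ^ 2) ^ α} := by
    rw [← isOpen_compl_iff]
    have hcompl : {y : Matrix (Fin n) (Fin n) ℝ |
          y.PosSemidef ∧ ε ≤ (x₀.det * y.det / ((x₀ + y).det) ^ 2) ^ α}ᶜ
        = {y : Matrix (Fin n) (Fin n) ℝ | y.PosSemidef}ᶜ ∪
          (W ∩ (fun y : Matrix (Fin n) (Fin n) ℝ =>
            (x₀.det * y.det / ((x₀ + y).det) ^ 2) ^ α) ⁻¹' Set.Iio ε) := by
      ext y
      simp only [Set.mem_compl_iff, Set.mem_setOf_eq, Set.mem_union, Set.mem_inter_iff,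
        Set.mem_preimage, Set.mem_Iio, not_and, not_le, hWdef]
      constructor
      · intro h
        by_cases hp : y.PosSemidef
        · exact Or.inr ⟨(hx₀.add_posSemidef hp).det_pos.ne', h hp⟩
        · exact Or.inl hp
      · rintro (h | h)
        · intro hp; exact absurd hp h
        · intro _; exact h.2
    rw [hcompl]
    exact (bp_isClosed_psd.isOpen_compl).union
      (hfc.isOpen_inter_preimage hWopen isOpen_Iio)
  have hbox : IsCompact ((Set.univ.pi fun _ : Fin n =>
      Set.univ.pi fun _ : Fin n => Set.Icc (-R) R) : Set (Matrix (Fin n) (Fin n) ℝ)) :=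
    isCompact_univ_pi fun _ => isCompact_univ_pi fun _ => isCompact_Icc
  rw [hSC]
  apply hbox.of_isClosed_subset hclosed
  intro (y : Matrix (Fin n) (Fin n) ℝ) hy
  obtain ⟨h1, h2⟩ := hy
  have hyd : y.PosDef := ((Set.ext_iff.mp hSC y).mpr ⟨h1, h2⟩).1
  have hentry := hbound y hyd h2
  refine Set.mem_univ_pi.mpr fun i => Set.mem_univ_pi.mpr fun j => ?_
  exact Set.mem_Icc.mpr (abs_le.mp (hentry i j))
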